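/- If x majorizes y in R^n and f is strictly concave, and x is not a permutation of y, then Σ f(x_i) < Σ f(y_i). -/

import Mathlib

open Finset

/-- Sum of the `k` largest entries of `x`. -/
noncomputable def topSum {n : ℕ} (x : Fin n → ℝ) (k : ℕ) : ℝ :=
  sSup {r : ℝ | ∃ s : Finset (Fin n), s.card = k ∧ r = ∑ i ∈ s, x i}

/-- `x` majorizes `y`. -/
def Majorizes {n : ℕ} (x y : Fin n → ℝ) : Prop :=
  (∀ k : ℕ, k < n → topSum y k ≤ topSum x k) ∧ (∑ i, x i = ∑ i, y i)

/-! ### Auxiliary lemmas -/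

/-- A choice of supergradient of `f` at `p`. -/
noncomputable def supergrad (f : ℝ → ℝ) (p : ℝ) : ℝ :=
  sSup {s : ℝ | ∃ t, p < t ∧ s = (f t - f p) / (t - p)}

lemma supergrad_spec {f : ℝ → ℝ} (hf : ConcaveOn ℝ Set.univ f) (p t : ℝ) :
    f t ≤ f p + supergrad f p * (t - p) := by
  have hbdd : BddAbove {s : ℝ | ∃ t, p < t ∧ s = (f t - f p) / (t - p)} := by
    refine ⟨(f p - f (p - 1)) / (p - (p - 1)), ?_⟩
    rintro s ⟨u, hu, rfl⟩
    exact hf.slope_anti_adjacent (Set.mem_univ _) (Set.mem_univ _) (by linarith) hu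
  have hne : {s : ℝ | ∃ t, p < t ∧ s = (f t - f p) / (t - p)}.Nonempty :=
    ⟨(f (p + 1) - f p) / ((p + 1) - p), p + 1, by linarith, rfl⟩
  rcases lt_trichotomy t p with h | h | h
  · have hle : supergrad f p ≤ (f p - f t) / (p - t) := by
      apply csSup_le hne
      rintro s ⟨u, hu, rfl⟩
      exact hf.slope_anti_adjacent (Set.mem_univ _) (Set.mem_univ _) h hu
    have hpt : (0:ℝ) < p - t := by linarith
    have := mul_le_mul_of_nonneg_right hle (le_of_lt hpt)
    rw [div_mul_cancel₀ _ (ne_of_gt hpt)] at this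
    nlinarith
  · simp [h]
  · have hle : (f t - f p) / (t - p) ≤ supergrad f p :=
      le_csSup hbdd ⟨t, h, rfl⟩
    have hpt : (0:ℝ) < t - p := by linarith
    have := mul_le_mul_of_nonneg_right hle (le_of_lt hpt)
    rw [div_mul_cancel₀ _ (ne_of_gt hpt)] at this
    linarith

lemma supergrad_anti {f : ℝ → ℝ} (hf : ConcaveOn ℝ Set.univ f) :
    Antitone (supergrad f) := by
  intro p q hpq
  rcases eq_or_lt_of_le hpq with rfl | h
  · exact le_rfl
  · have h1 := supergrad_spec hf p q
    have h2 := supergrad_spec hf q p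
    nlinarith [sq_nonneg (q - p)]

lemma supergrad_strict {f : ℝ → ℝ} (hf : StrictConcaveOn ℝ Set.univ f) {p q : ℝ}
    (hne : q ≠ p) : f q < f p + supergrad f p * (q - p) := by
  by_contra hcon
  push_neg at hcon
  have hmid := hf.2 (Set.mem_univ q) (Set.mem_univ p) hne
    (by norm_num : (0:ℝ) < 1/2) (by norm_num : (0:ℝ) < 1/2) (by norm_num)
  simp only [smul_eq_mul] at hmid
  have hspec := supergrad_spec hf.concaveOn p (1/2 * q + 1/2 * p)
  nlinarith

/-- Abel-summation estimate. -/
lemma abel_nonpos {n : ℕ} (g D : ℕ → ℝ)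
    (hg : ∀ i, i + 1 < n → g i ≤ g (i + 1))
    (hD : ∀ k, k ≤ n → 0 ≤ D k) (hD0 : D 0 = 0) (hDn : D n = 0) :
    ∑ i ∈ range n, g i * (D (i + 1) - D i) ≤ 0 := by
  have key : ∀ m, m + 1 ≤ n →
      ∑ i ∈ range (m + 1), g i * (D (i + 1) - D i) ≤ g m * D (m + 1) := by
    intro m
    induction m with
    | zero => intro _; simp [hD0]
    | succ m ih =>
      intro hm
      rw [sum_range_succ]
      have h1 := ih (by omega)
      have h2 : g m * D (m + 1) ≤ g (m + 1) * D (m + 1) :=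
        mul_le_mul_of_nonneg_right (hg m (by omega)) (hD _ (by omega))
      nlinarith
  cases n with
  | zero => simp
  | succ m =>
    have := key m le_rfl
    rw [hDn] at this
    simpa using this

lemma le_val_orderEmb {n k : ℕ} (e : Fin k → Fin n) (he : StrictMono e) (i : Fin k) :
    (i : ℕ) ≤ (e i : ℕ) := by
  rcases i with ⟨m, hm⟩
  induction m with
  | zero => exact Nat.zero_le _
  | succ m ih =>
    have h1 : e ⟨m, by omega⟩ < e ⟨m + 1, hm⟩ := he (by simp [Fin.lt_def])
    have h2 : m ≤ (e ⟨m, by omega⟩ : ℕ) := by simpa using ih (by omega)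
    have h3 := Fin.lt_def.mp h1
    simp only [Fin.val_mk] at h3 ⊢
    omega

lemma topSum_comp_perm {n : ℕ} (x : Fin n → ℝ) (σ : Equiv.Perm (Fin n)) (k : ℕ) :
    topSum (x ∘ σ) k = topSum x k := by
  unfold topSum
  congr 1
  ext r
  constructor
  · rintro ⟨s, hs, rfl⟩
    refine ⟨s.map σ.toEmbedding, by simp [hs], ?_⟩
    rw [Finset.sum_map]
    rfl
  · rintro ⟨s, hs, rfl⟩
    refine ⟨s.map σ.symm.toEmbedding, by simp [hs], ?_⟩
    rw [Finset.sum_map]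
    simp

lemma topSum_of_antitone {n : ℕ} (a : Fin n → ℝ) (ha : Antitone a) {k : ℕ} (hk : k ≤ n) :
    topSum a k = ∑ m ∈ range k, (if h : m < n then a ⟨m, h⟩ else 0) := by
  set F : ℕ → ℝ := fun m => if h : m < n then a ⟨m, h⟩ else 0 with hF
  have hsum : ∀ s : Finset (Fin n), s.card = k → ∑ i ∈ s, a i ≤ ∑ m ∈ range k, F m := by
    intro s hs
    have hmap : s = Finset.map (s.orderEmbOfFin hs).toEmbedding Finset.univ := by
      ext i
      simp only [Finset.mem_map, Finset.mem_univ, true_and]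
      constructor
      · intro hi
        have h2 : i ∈ Set.range ⇑(s.orderEmbOfFin hs) := by
          rw [Finset.range_orderEmbOfFin s hs]; exact hi
        obtain ⟨j, hj⟩ := h2
        exact ⟨j, hj⟩
      · rintro ⟨j, rfl⟩
        exact Finset.orderEmbOfFin_mem s hs j
    rw [hmap, Finset.sum_map]
    rw [← Fin.sum_univ_eq_sum_range F k]
    apply Finset.sum_le_sum
    intro j _
    have hj : (j : ℕ) < n := lt_of_lt_of_le j.2 hk
    have hle : (⟨(j : ℕ), hj⟩ : Fin n) ≤ (s.orderEmbOfFin hs).toEmbedding j := by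
      rw [Fin.le_def]
      exact le_val_orderEmb _ (s.orderEmbOfFin hs).strictMono j
    calc a ((s.orderEmbOfFin hs).toEmbedding j) ≤ a ⟨(j : ℕ), hj⟩ := ha hle
      _ = F (j : ℕ) := by rw [hF]; simp [hj]
  have hmem : (∑ m ∈ range k, F m) ∈
      {r : ℝ | ∃ s : Finset (Fin n), s.card = k ∧ r = ∑ i ∈ s, a i} := by
    refine ⟨Finset.map (Fin.castLEEmb hk) Finset.univ, by simp, ?_⟩
    rw [Finset.sum_map, ← Fin.sum_univ_eq_sum_range F k]
    apply Finset.sum_congr rfl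
    intro j _
    have hj : (j : ℕ) < n := lt_of_lt_of_le j.2 hk
    simp only [hF, dif_pos hj]
    rfl
  refine le_antisymm ?_ ?_
  · apply csSup_le ⟨_, hmem⟩
    rintro r ⟨s, hs, rfl⟩
    exact hsum s hs
  · exact le_csSup ⟨_, fun r ⟨s, hs, hr⟩ => hr ▸ hsum s hs⟩ hmem

/-- Strict Karamata inequality: if `x` majorizes `y`, `f` is strictly concave and `x`
is not a permutation of `y`, then `∑ f (x i) < ∑ f (y i)`. -/
theorem karamata_strict_concave {n : ℕ} (x y : Fin n → ℝ) (f : ℝ → ℝ)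
    (hmaj : Majorizes x y) (hf : StrictConcaveOn ℝ Set.univ f)
    (hnp : ¬ ∃ σ : Equiv.Perm (Fin n), y = x ∘ σ) :
    ∑ i, f (x i) < ∑ i, f (y i) := by
  classical
  set σa : Equiv.Perm (Fin n) := Fin.revPerm.trans (Tuple.sort x) with hσa
  set σb : Equiv.Perm (Fin n) := Fin.revPerm.trans (Tuple.sort y) with hσb
  set a : Fin n → ℝ := x ∘ σa with haa
  set b : Fin n → ℝ := y ∘ σb with hbb
  have hamono : Antitone a := by
    intro i j hij
    exact Tuple.monotone_sort x (Fin.rev_le_rev.mpr hij)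
  have hbmono : Antitone b := by
    intro i j hij
    exact Tuple.monotone_sort y (Fin.rev_le_rev.mpr hij)
  have hab : a ≠ b := by
    intro h
    apply hnp
    refine ⟨σb.symm.trans σa, ?_⟩
    funext i
    have := congrFun h (σb.symm i)
    simpa [haa, hbb] using this.symm
  -- ℕ-indexed versions
  set a' : ℕ → ℝ := fun m => if h : m < n then a ⟨m, h⟩ else 0 with ha'
  set b' : ℕ → ℝ := fun m => if h : m < n then b ⟨m, h⟩ else 0 with hb'
  have hsa : ∀ k, k ≤ n → ∑ m ∈ range k, a' m = topSum x k := by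
    intro k hk
    rw [← topSum_comp_perm x σa k, ← haa, topSum_of_antitone a hamono hk]
  have hsb : ∀ k, k ≤ n → ∑ m ∈ range k, b' m = topSum y k := by
    intro k hk
    rw [← topSum_comp_perm y σb k, ← hbb, topSum_of_antitone b hbmono hk]
  have hta : ∑ m ∈ range n, a' m = ∑ i, x i := by
    rw [← Fin.sum_univ_eq_sum_range a' n]
    rw [show ∑ i : Fin n, a' i = ∑ i, a i from
      Finset.sum_congr rfl fun i _ => by simp [ha', i.2]]
    exact Equiv.sum_comp σa x
  have htb : ∑ m ∈ range n, b' m = ∑ i, y i := by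
    rw [← Fin.sum_univ_eq_sum_range b' n]
    rw [show ∑ i : Fin n, b' i = ∑ i, b i from
      Finset.sum_congr rfl fun i _ => by simp [hb', i.2]]
    exact Equiv.sum_comp σb y
  -- partial sums of differences
  set D : ℕ → ℝ := fun k => ∑ m ∈ range k, (a' m - b' m) with hD
  have hDsplit : ∀ k, D k = ∑ m ∈ range k, a' m - ∑ m ∈ range k, b' m := by
    intro k; rw [hD]; exact Finset.sum_sub_distrib _ _
  have hDnonneg : ∀ k, k ≤ n → 0 ≤ D k := by
    intro k hk
    rcases lt_or_eq_of_le hk with h | h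
    · rw [hDsplit, hsa k hk, hsb k hk]
      linarith [hmaj.1 k h]
    · subst h
      rw [hDsplit, hta, htb, hmaj.2]
      simp
  have hDn : D n = 0 := by
    rw [hDsplit, hta, htb, hmaj.2]; simp
  have hD0 : D 0 = 0 := by simp [hD]
  -- the supergradient sequence
  set g : ℕ → ℝ := fun m => supergrad f (b' m) with hg
  have hgmono : ∀ i, i + 1 < n → g i ≤ g (i + 1) := by
    intro i hi
    apply supergrad_anti hf.concaveOn
    have h1 : i < n := by omega
    simp only [hb', dif_pos hi, dif_pos h1]
    exact hbmono (by simp [Fin.le_def])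
  have habel : ∑ m ∈ range n, g m * (a' m - b' m) ≤ 0 := by
    have : ∀ m, a' m - b' m = D (m + 1) - D m := by
      intro m
      simp only [hD, Finset.sum_range_succ]
      ring
    calc ∑ m ∈ range n, g m * (a' m - b' m)
        = ∑ m ∈ range n, g m * (D (m + 1) - D m) :=
          Finset.sum_congr rfl fun m _ => by rw [this]
      _ ≤ 0 := abel_nonpos g D hgmono hDnonneg hD0 hDn
  -- strict pointwise inequality
  have hstrict : ∑ m ∈ range n, f (a' m) <
      ∑ m ∈ range n, (f (b' m) + g m * (a' m - b' m)) := by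
    apply Finset.sum_lt_sum
    · intro m _
      exact supergrad_spec hf.concaveOn (b' m) (a' m)
    · obtain ⟨i, hi⟩ := Function.ne_iff.mp hab
      refine ⟨(i : ℕ), Finset.mem_range.mpr i.2, ?_⟩
      apply supergrad_strict hf
      simp only [ha', hb', dif_pos i.2]
      simpa [Fin.eta] using hi
  -- assemble
  have hfa : ∑ i, f (x i) = ∑ m ∈ range n, f (a' m) := by
    rw [← Fin.sum_univ_eq_sum_range (fun m => f (a' m)) n]
    rw [show ∑ i : Fin n, f (a' i) = ∑ i, f (a i) from
      Finset.sum_congr rfl fun i _ => by simp [ha', i.2]]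
    exact (Equiv.sum_comp σa (fun i => f (x i))).symm
  have hfb : ∑ i, f (y i) = ∑ m ∈ range n, f (b' m) := by
    rw [← Fin.sum_univ_eq_sum_range (fun m => f (b' m)) n]
    rw [show ∑ i : Fin n, f (b' i) = ∑ i, f (b i) from
      Finset.sum_congr rfl fun i _ => by simp [hb', i.2]]
    exact (Equiv.sum_comp σb (fun i => f (y i))).symm
  rw [hfa, hfb]
  calc ∑ m ∈ range n, f (a' m)
      < ∑ m ∈ range n, (f (b' m) + g m * (a' m - b' m)) := hstrict
    _ = ∑ m ∈ range n, f (b' m) + ∑ m ∈ range n, g m * (a' m - b' m) :=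
        Finset.sum_add_distrib
    _ ≤ ∑ m ∈ range n, f (b' m) := by linarith
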